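/- Let n ≥ 3 be an integer, set r₊ := 2^{1/(n−1)}, and define V(r) := r² − 2·r^{3−n} for r > 0. If h : (r₊, ∞) → ℝ is differentiable, satisfies V(r)·h'(r) + (V'(r) + (n−2)·V(r)/r)·h(r) = 0 for all r > r₊, and is bounded on the interval (r₊, r₊ + 1), then h ≡ 0 on (r₊, ∞). (Indeed, every nonzero solution h(r) = C/(V(r)·r^{n−2}) satisfies (r − r₊)·h(r) → C/((n−1)·r₊^{n−1}) ≠ 0 as r → r₊⁺.) -/

import Mathlib

open Set Filter

/-- **Bounded solutions of the divergence-free ODE vanish:** a solution of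
`V h' + (V' + (n-2)V/r) h = 0` on `(r₊, ∞)` that is bounded on `(r₊, r₊+1)` is
identically zero; indeed every solution `h(r) = C/(V(r) r^{n-2})` satisfies
`(r - r₊) h(r) → C/((n-1) r₊^{n-1})` as `r → r₊⁺`. -/
theorem divergence_free_ode_bounded_vanishes (n : ℕ) (hn : 3 ≤ n) (rp : ℝ) (V Vd : ℝ → ℝ)
    (hrp : rp = (2 : ℝ) ^ ((1 : ℝ) / ((n : ℝ) - 1)))
    (hV : ∀ r > (0 : ℝ), V r = r ^ 2 - 2 * r ^ ((3 : ℝ) - (n : ℝ)))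
    (hVd : ∀ r > (0 : ℝ), HasDerivAt V (Vd r) r)
    (h h' : ℝ → ℝ)
    (hd : ∀ r > rp, HasDerivAt h (h' r) r)
    (hode : ∀ r > rp, V r * h' r + (Vd r + ((n : ℝ) - 2) * V r / r) * h r = 0)
    (hbdd : ∃ K : ℝ, ∀ r ∈ Ioo rp (rp + 1), |h r| ≤ K) :
    (∀ r > rp, h r = 0)
    ∧ ∀ C : ℝ,
        Tendsto (fun r : ℝ => (r - rp) * (C / (V r * r ^ ((n : ℝ) - 2))))
          (nhdsWithin rp (Ioi rp)) (nhds (C / (((n : ℝ) - 1) * rp ^ ((n : ℝ) - 1)))) := by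
  obtain ⟨K, hK⟩ := hbdd
  have hn3 : (3 : ℝ) ≤ (n : ℝ) := by exact_mod_cast hn
  have hn1 : (0 : ℝ) < (n : ℝ) - 1 := by linarith
  have hne : ((n : ℝ) - 1) ≠ 0 := ne_of_gt hn1
  have hrp1 : 1 < rp := by
    rw [hrp]
    exact (Real.one_lt_rpow_iff_of_pos (by norm_num)).mpr
      (Or.inl ⟨by norm_num, by positivity⟩)
  have rp_pos : 0 < rp := lt_trans one_pos hrp1
  have rp_pow : rp ^ ((n : ℝ) - 1) = 2 := by
    rw [hrp, ← Real.rpow_mul (by norm_num : (0:ℝ) ≤ 2), one_div_mul_cancel hne,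
      Real.rpow_one]
  -- factorisation of V
  have hVfac : ∀ r > (0 : ℝ), V r = r ^ ((3 : ℝ) - (n : ℝ)) * (r ^ ((n : ℝ) - 1) - 2) := by
    intro r hr
    rw [hV r hr, mul_sub, ← Real.rpow_add hr]
    have he : ((3 : ℝ) - (n : ℝ)) + ((n : ℝ) - 1) = ((2 : ℕ) : ℝ) := by push_cast; ring
    rw [he, Real.rpow_natCast]
    ring
  have hVrp0 : V rp = 0 := by
    rw [hVfac rp rp_pos, rp_pow]; ring
  have hVpos : ∀ r > rp, 0 < V r := by
    intro r hr
    have hr0 : 0 < r := rp_pos.trans hr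
    rw [hVfac r hr0]
    refine mul_pos (Real.rpow_pos_of_pos hr0 _) ?_
    have : rp ^ ((n : ℝ) - 1) < r ^ ((n : ℝ) - 1) :=
      Real.rpow_lt_rpow rp_pos.le hr hn1
    rw [rp_pow] at this; linarith
  -- the explicit derivative of V
  have hVderiv : ∀ r > (0 : ℝ),
      HasDerivAt V (2 * r - 2 * (((3 : ℝ) - (n : ℝ)) * r ^ ((3 : ℝ) - (n : ℝ) - 1))) r := by
    intro r hr
    have h2 : HasDerivAt (fun x : ℝ => x ^ ((3 : ℝ) - (n : ℝ)))
        (((3 : ℝ) - (n : ℝ)) * r ^ ((3 : ℝ) - (n : ℝ) - 1)) r :=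
      Real.hasDerivAt_rpow_const (p := (3 : ℝ) - (n : ℝ)) (Or.inl hr.ne')
    have h1 : HasDerivAt (fun x : ℝ => x ^ 2 - 2 * x ^ ((3 : ℝ) - (n : ℝ)))
        (2 * r - 2 * (((3 : ℝ) - (n : ℝ)) * r ^ ((3 : ℝ) - (n : ℝ) - 1))) r := by
      have := (hasDerivAt_pow 2 r).sub (h2.const_mul 2)
      refine this.congr_deriv ?_
      norm_num
    refine h1.congr_of_eventuallyEq ?_
    exact Filter.eventuallyEq_of_mem (Ioi_mem_nhds hr) fun x hx => hV x hx
  -- derivative of V at rp is (n-1) rp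
  have hVdrp : HasDerivAt V (((n : ℝ) - 1) * rp) rp := by
    have key : rp ^ ((3 : ℝ) - (n : ℝ) - 1) = rp / 2 := by
      rw [show (3 : ℝ) - (n : ℝ) - 1 = 1 - ((n : ℝ) - 1) by ring,
        Real.rpow_sub rp_pos, Real.rpow_one, rp_pow]
    have := hVderiv rp rp_pos
    rw [key] at this
    convert this using 1
    ring
  -- the slope limit
  have hslope : Tendsto (fun r => V r / (r - rp)) (nhdsWithin rp (Ioi rp))
      (nhds (((n : ℝ) - 1) * rp)) := by
    have h1 := hasDerivAt_iff_tendsto_slope.mp hVdrp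
    have h2 := h1.mono_left
      (nhdsWithin_mono rp fun x hx => ne_of_gt (mem_Ioi.mp hx))
    refine h2.congr fun x => ?_
    rw [slope_def_field, hVrp0]
    ring
  have hrp_ne : (((n : ℝ) - 1) * rp) ≠ 0 := by positivity
  have hinv : Tendsto (fun r => (r - rp) / V r) (nhdsWithin rp (Ioi rp))
      (nhds ((((n : ℝ) - 1) * rp)⁻¹)) := by
    have := hslope.inv₀ hrp_ne
    refine this.congr fun x => ?_
    rw [inv_div]
  have hrpow_ne : rp ^ ((n : ℝ) - 2) ≠ 0 := ne_of_gt (Real.rpow_pos_of_pos rp_pos _)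
  have hsplit : rp ^ ((n : ℝ) - 1) = rp * rp ^ ((n : ℝ) - 2) := by
    rw [show ((n : ℝ) - 1) = 1 + ((n : ℝ) - 2) by ring, Real.rpow_add rp_pos, Real.rpow_one]
  -- the general limit statement
  have htend : ∀ C : ℝ,
      Tendsto (fun r : ℝ => (r - rp) * (C / (V r * r ^ ((n : ℝ) - 2))))
        (nhdsWithin rp (Ioi rp)) (nhds (C / (((n : ℝ) - 1) * rp ^ ((n : ℝ) - 1)))) := by
    intro C
    have hpow : Tendsto (fun r : ℝ => C / r ^ ((n : ℝ) - 2)) (nhdsWithin rp (Ioi rp))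
        (nhds (C / rp ^ ((n : ℝ) - 2))) := by
      refine Tendsto.mono_left ?_ nhdsWithin_le_nhds
      exact tendsto_const_nhds.div
        ((Real.continuousAt_rpow_const rp _ (Or.inl rp_pos.ne')).tendsto) hrpow_ne
    have hmul := hinv.mul hpow
    have hval : (((n : ℝ) - 1) * rp)⁻¹ * (C / rp ^ ((n : ℝ) - 2))
        = C / (((n : ℝ) - 1) * rp ^ ((n : ℝ) - 1)) := by
      rw [hsplit, ← one_div, div_mul_div_comm, one_mul, mul_assoc]
    rw [hval] at hmul
    exact hmul.congr fun x => by ring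
  refine ⟨?_, htend⟩
  -- part 1 : the solution vanishes
  have hw : ∀ r > rp, HasDerivAt (fun x => V x * x ^ ((n : ℝ) - 2) * h x) 0 r := by
    intro r hr
    have hr0 : 0 < r := rp_pos.trans hr
    have hp : HasDerivAt (fun x : ℝ => x ^ ((n : ℝ) - 2))
        (((n : ℝ) - 2) * r ^ ((n : ℝ) - 2 - 1)) r :=
      Real.hasDerivAt_rpow_const (p := (n : ℝ) - 2) (Or.inl hr0.ne')
    have H := ((hVd r hr0).mul hp).mul (hd r hr)
    have hrpow : r ^ ((n : ℝ) - 2 - 1) = r ^ ((n : ℝ) - 2) / r := by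
      rw [Real.rpow_sub hr0, Real.rpow_one]
    have key : (Vd r * r ^ ((n : ℝ) - 2) + V r * (((n : ℝ) - 2) * r ^ ((n : ℝ) - 2 - 1))) * h r
        + V r * r ^ ((n : ℝ) - 2) * h' r = 0 := by
      rw [hrpow]
      calc (Vd r * r ^ ((n : ℝ) - 2) + V r * (((n : ℝ) - 2) * (r ^ ((n : ℝ) - 2) / r))) * h r
            + V r * r ^ ((n : ℝ) - 2) * h' r
          = r ^ ((n : ℝ) - 2) * (V r * h' r + (Vd r + ((n : ℝ) - 2) * V r / r) * h r) := by
            ring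
        _ = 0 := by rw [hode r hr, mul_zero]
    simp only [Pi.mul_apply] at H
    rwa [key] at H
  have hconst : ∀ r > rp, V r * r ^ ((n : ℝ) - 2) * h r
      = V (rp + 1) * (rp + 1) ^ ((n : ℝ) - 2) * h (rp + 1) := by
    intro r hr
    have hb : (rp + 1) ∈ Ioi rp := mem_Ioi.mpr (by linarith)
    have key := (convex_Ioi rp).norm_image_sub_le_of_norm_hasDerivWithin_le
      (f' := fun _ => (0 : ℝ)) (C := 0) (fun x hx => (hw x hx).hasDerivWithinAt)
      (fun x _ => by simp) hb hr
    rw [zero_mul] at key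
    have := norm_le_zero_iff.mp key
    simpa [sub_eq_zero] using this
  have hVr_ne : ∀ r > rp, V r * r ^ ((n : ℝ) - 2) ≠ 0 := by
    intro r hr
    have hr0 : 0 < r := rp_pos.trans hr
    exact ne_of_gt (mul_pos (hVpos r hr) (Real.rpow_pos_of_pos hr0 _))
  set c : ℝ := V (rp + 1) * (rp + 1) ^ ((n : ℝ) - 2) * h (rp + 1) with hc_def
  have hform : ∀ r > rp, h r = c / (V r * r ^ ((n : ℝ) - 2)) := by
    intro r hr
    rw [eq_div_iff (hVr_ne r hr)]
    linear_combination hconst r hr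
  -- (r - rp) h r → 0 by boundedness
  have hzero : Tendsto (fun r => (r - rp) * h r) (nhdsWithin rp (Ioi rp)) (nhds 0) := by
    have hg : Tendsto (fun r : ℝ => (r - rp) * (max K 0)) (nhdsWithin rp (Ioi rp)) (nhds 0) := by
      have hsub : Tendsto (fun r : ℝ => r - rp) (nhdsWithin rp (Ioi rp)) (nhds 0) := by
        have hc : Continuous (fun r : ℝ => r - rp) := continuous_id.sub continuous_const
        have ht := (hc.tendsto rp).mono_left (nhdsWithin_le_nhds (s := Ioi rp))
        simpa using ht
      simpa using hsub.mul_const (max K 0)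
    refine squeeze_zero_norm' ?_ hg
    filter_upwards [Ioo_mem_nhdsGT_of_mem
      (⟨le_refl rp, by linarith⟩ : rp ∈ Ico rp (rp + 1))] with r hr
    have h1 : 0 ≤ r - rp := by linarith [hr.1]
    have h2 : |h r| ≤ max K 0 := le_trans (hK r hr) (le_max_left _ _)
    calc ‖(r - rp) * h r‖ = (r - rp) * |h r| := by
          rw [Real.norm_eq_abs, abs_mul, abs_of_nonneg h1]
      _ ≤ (r - rp) * max K 0 := mul_le_mul_of_nonneg_left h2 h1
  -- identify the limits
  have heq : (fun r => (r - rp) * h r) =ᶠ[nhdsWithin rp (Ioi rp)]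
      (fun r : ℝ => (r - rp) * (c / (V r * r ^ ((n : ℝ) - 2)))) := by
    filter_upwards [self_mem_nhdsWithin] with r hr
    rw [hform r hr]
  have hzero' := hzero.congr' heq
  have h0 : c / (((n : ℝ) - 1) * rp ^ ((n : ℝ) - 1)) = 0 :=
    (tendsto_nhds_unique hzero' (htend c)).symm
  have hden : (((n : ℝ) - 1) * rp ^ ((n : ℝ) - 1)) ≠ 0 :=
    mul_ne_zero hne (ne_of_gt (Real.rpow_pos_of_pos rp_pos _))
  have hc0 : c = 0 := by
    rcases div_eq_zero_iff.mp h0 with hc | hc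
    · exact hc
    · exact absurd hc hden
  intro r hr
  have := hform r hr
  rw [hc0, zero_div] at this
  exact this
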